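/- For n = (3,4,5), the kernel of the ℂ-algebra homomorphism φ : ℂ[x,y,z] → ℂ[t] with φ(x) = t³, φ(y) = t⁴, φ(z) = t⁵ is the ideal I = (y² − xz, x³ − yz, z² − x²y). -/

import Mathlib

open MvPolynomial

noncomputable def iot (A : Polynomial ℂ) : MvPolynomial (Fin 3) ℂ :=
  Polynomial.aeval (MvPolynomial.X 0 : MvPolynomial (Fin 3) ℂ) A

lemma iot_mul (A B : Polynomial ℂ) : iot (A * B) = iot A * iot B := map_mul _ _ _
lemma iot_add (A B : Polynomial ℂ) : iot (A + B) = iot A + iot B := map_add _ _ _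
lemma iot_X : iot Polynomial.X = MvPolynomial.X 0 := Polynomial.aeval_X _
lemma iot_Xpow (n : ℕ) : iot (Polynomial.X ^ n) = MvPolynomial.X 0 ^ n := by
  simp only [iot, map_pow, Polynomial.aeval_X]
lemma iot_C (a : ℂ) : iot (Polynomial.C a) = MvPolynomial.C a := by
  simp [iot, Polynomial.aeval_C, MvPolynomial.algebraMap_eq]
lemma iot_zero : iot 0 = 0 := map_zero _

lemma normal_form (I : Ideal (MvPolynomial (Fin 3) ℂ))
    (h1 : MvPolynomial.X 1 ^ 2 - MvPolynomial.X 0 * MvPolynomial.X 2 ∈ I)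
    (h2 : MvPolynomial.X 0 ^ 3 - MvPolynomial.X 1 * MvPolynomial.X 2 ∈ I)
    (h3 : MvPolynomial.X 2 ^ 2 - MvPolynomial.X 0 ^ 2 * MvPolynomial.X 1 ∈ I)
    (p : MvPolynomial (Fin 3) ℂ) :
    ∃ A B C : Polynomial ℂ,
      p - (iot A + iot B * MvPolynomial.X 1 + iot C * MvPolynomial.X 2) ∈ I := by
  induction p using MvPolynomial.induction_on with
  | C a =>
    refine ⟨Polynomial.C a, 0, 0, ?_⟩
    simp [iot_C, iot_zero]
  | add p q hp hq =>
    obtain ⟨A, B, C, h⟩ := hp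
    obtain ⟨A', B', C', h'⟩ := hq
    refine ⟨A + A', B + B', C + C', ?_⟩
    have := I.add_mem h h'
    convert this using 1
    simp only [iot_add]; ring
  | mul_X p i hp =>
    obtain ⟨A, B, C, h⟩ := hp
    fin_cases i <;>
      simp only [Fin.zero_eta, Fin.mk_one, show (⟨2, by omega⟩ : Fin 3) = 2 from rfl]
    · refine ⟨A * Polynomial.X, B * Polynomial.X, C * Polynomial.X, ?_⟩
      have := I.mul_mem_right (MvPolynomial.X 0) h
      convert this using 1
      simp only [iot_mul, iot_X]; ring
    · refine ⟨C * Polynomial.X ^ 3, A, B * Polynomial.X, ?_⟩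
      have := I.add_mem (I.add_mem (I.mul_mem_right (MvPolynomial.X 1) h)
        (I.mul_mem_left (iot B) h1)) (I.mul_mem_left (iot C) (I.neg_mem h2))
      convert this using 1
      simp only [iot_mul, iot_X, iot_Xpow]; ring
    · refine ⟨B * Polynomial.X ^ 3, C * Polynomial.X ^ 2, A, ?_⟩
      have := I.add_mem (I.add_mem (I.mul_mem_right (MvPolynomial.X 2) h)
        (I.mul_mem_left (iot C) h3)) (I.mul_mem_left (iot B) (I.neg_mem h2))
      convert this using 1
      simp only [iot_mul, iot_X, iot_Xpow]; ring

lemma normal_inj (A B C : Polynomial ℂ)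
    (h : Polynomial.expand ℂ 3 A + Polynomial.expand ℂ 3 B * Polynomial.X ^ 4
        + Polynomial.expand ℂ 3 C * Polynomial.X ^ 5 = 0) :
    A = 0 ∧ B = 0 ∧ C = 0 := by
  have key : ∀ n : ℕ, (Polynomial.expand ℂ 3 A).coeff n
      + (Polynomial.expand ℂ 3 B * Polynomial.X ^ 4).coeff n
      + (Polynomial.expand ℂ 3 C * Polynomial.X ^ 5).coeff n = 0 := by
    intro n
    have := congrArg (fun q => Polynomial.coeff q n) h
    simpa using this
  refine ⟨?_, ?_, ?_⟩
  · ext k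
    have := key (3 * k)
    simp only [Polynomial.coeff_mul_X_pow',
      Polynomial.coeff_expand (show 0 < 3 by norm_num)] at this
    split_ifs at this <;>
      first
        | (exfalso; omega)
        | (rw [show 3 * k / 3 = k from by omega] at this; simpa using this)
  · ext k
    have := key (3 * k + 4)
    simp only [Polynomial.coeff_mul_X_pow',
      Polynomial.coeff_expand (show 0 < 3 by norm_num)] at this
    split_ifs at this <;>
      first
        | (exfalso; omega)
        | (rw [show (3 * k + 4 - 4) / 3 = k from by omega] at this; simpa using this)
  · ext k
    have := key (3 * k + 5)
    simp only [Polynomial.coeff_mul_X_pow',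
      Polynomial.coeff_expand (show 0 < 3 by norm_num)] at this
    split_ifs at this <;>
      first
        | (exfalso; omega)
        | (rw [show (3 * k + 5 - 5) / 3 = k from by omega] at this; simpa using this)

theorem kernel_345 :
    RingHom.ker (MvPolynomial.aeval
        (![Polynomial.X ^ 3, Polynomial.X ^ 4, Polynomial.X ^ 5] :
          Fin 3 → Polynomial ℂ)) =
      Ideal.span ({X 1 ^ 2 - X 0 * X 2, X 0 ^ 3 - X 1 * X 2, X 2 ^ 2 - X 0 ^ 2 * X 1} :
        Set (MvPolynomial (Fin 3) ℂ)) := by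
  set f : Fin 3 → Polynomial ℂ := ![Polynomial.X ^ 3, Polynomial.X ^ 4, Polynomial.X ^ 5] with hf
  set I := Ideal.span ({X 1 ^ 2 - X 0 * X 2, X 0 ^ 3 - X 1 * X 2, X 2 ^ 2 - X 0 ^ 2 * X 1} :
        Set (MvPolynomial (Fin 3) ℂ)) with hI
  have h1 : MvPolynomial.X 1 ^ 2 - MvPolynomial.X 0 * MvPolynomial.X 2 ∈ I :=
    Ideal.subset_span (by simp)
  have h2 : MvPolynomial.X 0 ^ 3 - MvPolynomial.X 1 * MvPolynomial.X 2 ∈ I :=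
    Ideal.subset_span (by simp)
  have h3 : MvPolynomial.X 2 ^ 2 - MvPolynomial.X 0 ^ 2 * MvPolynomial.X 1 ∈ I :=
    Ideal.subset_span (by simp)
  have hsub : I ≤ RingHom.ker (MvPolynomial.aeval f) := by
    rw [hI, Ideal.span_le]
    rintro q hq
    simp only [Set.mem_insert_iff, Set.mem_singleton_iff] at hq
    rcases hq with rfl | rfl | rfl <;>
      · simp only [SetLike.mem_coe, RingHom.mem_ker, map_sub, map_mul, map_pow, aeval_X, hf]
        simp [Matrix.cons_val_zero, Matrix.cons_val_one]
        ring
  apply le_antisymm _ hsub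
  intro p hp
  rw [RingHom.mem_ker] at hp
  obtain ⟨A, B, C, hm⟩ := normal_form I h1 h2 h3 p
  have himg : MvPolynomial.aeval f (p - (iot A + iot B * MvPolynomial.X 1
      + iot C * MvPolynomial.X 2)) = 0 := by
    have := hsub hm
    rwa [RingHom.mem_ker] at this
  have haeval_iot : ∀ D : Polynomial ℂ,
      MvPolynomial.aeval f (iot D) = Polynomial.expand ℂ 3 D := by
    intro D
    rw [iot, ← Polynomial.aeval_algHom_apply]
    simp only [aeval_X, hf, Matrix.cons_val_zero]
    rw [Polynomial.expand_eq_comp_X_pow, Polynomial.comp, Polynomial.aeval_def,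
      Polynomial.algebraMap_eq]
  rw [map_sub, hp, zero_sub, neg_eq_zero, map_add, map_add, map_mul, map_mul,
    aeval_X, aeval_X, haeval_iot, haeval_iot, haeval_iot] at himg
  simp only [hf, Matrix.cons_val_one, Matrix.head_cons] at himg
  obtain ⟨hA, hB, hC⟩ := normal_inj A B C (by convert himg using 2 <;> simp)
  subst hA; subst hB; subst hC
  simpa [iot_zero] using hm
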